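/- arXiv:1609.00495 — 7 statements merged into one kernel-verified Lean document; each statement's English description precedes it below -/
import Mathlib

section
/- Let f be a polynomial in z, k and μ constants, and define h = −z·L_z(f) + k(z+μ)f², where L_z(f) = f·f'' − (f')² + (f/z)·f'. Then f divides the polynomial z·L_z(h) − 2k(z+μ)h². -/
open Polynomial

/-- The operator `L_z(f) = f·f'' − (f')² + (f/z)·f'`, viewed as a rational function. -/
noncomputable def Lz (f : Polynomial ℂ) : RatFunc ℂ :=
  algebraMap (Polynomial ℂ) (RatFunc ℂ) (f * derivative (derivative f) - (derivative f) ^ 2)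
    + (algebraMap (Polynomial ℂ) (RatFunc ℂ) f / RatFunc.X)
      * algebraMap (Polynomial ℂ) (RatFunc ℂ) (derivative f)

/-- `h = −z·L_z(f) + k(z+μ)f²`, which is a polynomial:
`h = −z(f·f'' − (f')²) − f·f' + k(z+μ)f²`. -/
noncomputable def hPoly (k μ : ℂ) (f : Polynomial ℂ) : Polynomial ℂ :=
  -(X * (f * derivative (derivative f) - (derivative f) ^ 2)) - f * derivative f
    + Polynomial.C k * (X + Polynomial.C μ) * f ^ 2

set_option maxHeartbeats 2000000 in
theorem stmt2 (k μ : ℂ) (f : Polynomial ℂ)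
    (h : Polynomial ℂ) (hh : h = hPoly k μ f)
    (hLz : algebraMap (Polynomial ℂ) (RatFunc ℂ) h
      = -RatFunc.X * Lz f + RatFunc.C k * (RatFunc.X + RatFunc.C μ)
          * (algebraMap (Polynomial ℂ) (RatFunc ℂ) f) ^ 2) :
    f ∣ (X * (h * derivative (derivative h) - (derivative h) ^ 2) + h * derivative h
          - Polynomial.C (2 * k) * (X + Polynomial.C μ) * h ^ 2) := by
  subst hh
  set f1 := derivative f with hf1
  set f2 := derivative f1 with hf2
  set f3 := derivative f2 with hf3
  set f4 := derivative f3 with hf4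
  refine ⟨(2:Polynomial ℂ)*f*f1*f2 + (-1:Polynomial ℂ)*(C k)*f^2*f1 + (-4:Polynomial ℂ)*(C k)*(C μ)*f*f1^2 + (-2:Polynomial ℂ)*(C k)*(C μ)*f^2*f2 + (1:Polynomial ℂ)*(C k)^2*(C μ)*f^3 + (6:Polynomial ℂ)*(C k)^2*(C μ)^2*f^2*f1 + (-2:Polynomial ℂ)*(C k)^3*(C μ)^3*f^3 + (-2:Polynomial ℂ)*X*f1^2*f2 + (-2:Polynomial ℂ)*X*f*f2^2 + (4:Polynomial ℂ)*X*f*f1*f3 + (-7:Polynomial ℂ)*X*(C k)*f*f1^2 + (1:Polynomial ℂ)*X*(C k)*f^2*f2 + (4:Polynomial ℂ)*X*(C k)*(C μ)*f1^3 + (-4:Polynomial ℂ)*X*(C k)*(C μ)*f^2*f3 + (12:Polynomial ℂ)*X*(C k)^2*(C μ)*f^2*f1 + (-6:Polynomial ℂ)*X*(C k)^2*(C μ)^2*f*f1^2 + (6:Polynomial ℂ)*X*(C k)^2*(C μ)^2*f^2*f2 + (-6:Polynomial ℂ)*X*(C k)^3*(C μ)^2*f^3 + (3:Polynomial ℂ)*X^2*f1*f2^2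 + (-4:Polynomial ℂ)*X^2*f1^2*f3 + (1:Polynomial ℂ)*X^2*f*f1*f4 + (8:Polynomial ℂ)*X^2*(C k)*f1^3 + (-6:Polynomial ℂ)*X^2*(C k)*f*f1*f2 + (-2:Polynomial ℂ)*X^2*(C k)*f^2*f3 + (-3:Polynomial ℂ)*X^2*(C k)*(C μ)*f*f2^2 + (4:Polynomial ℂ)*X^2*(C k)*(C μ)*f*f1*f3 + (-1:Polynomial ℂ)*X^2*(C k)*(C μ)*f^2*f4 + (6:Polynomial ℂ)*X^2*(C k)^2*f^2*f1 + (-12:Polynomial ℂ)*X^2*(C k)^2*(C μ)*f*f1^2 + (12:Polynomial ℂ)*X^2*(C k)^2*(C μ)*f^2*f2 + (-6:Polynomial ℂ)*X^2*(C k)^3*(C μ)*f^3 + (-1:Polynomial ℂ)*X^3*f2^3 + (2:Polynomial ℂ)*X^3*f1*f2*f3 + (-1:Polynomial ℂ)*X^3*f1^2*f4 + (-1:Polynomial ℂ)*X^3*f*f3^2 + (1:Polynomial ℂ)*X^3*f*f2*f4 + (-3:Polynomial ℂ)*X^3*(C k)*f*f2^2 + (4:Polynomial ℂ)*X^3*(C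 k)*f*f1*f3 + (-1:Polynomial ℂ)*X^3*(C k)*f^2*f4 + (-6:Polynomial ℂ)*X^3*(C k)^2*f*f1^2 + (6:Polynomial ℂ)*X^3*(C k)^2*f^2*f2 + (-2:Polynomial ℂ)*X^3*(C k)^3*f^3, ?_⟩
  simp only [hPoly, ← hf1, derivative_add, derivative_sub, derivative_neg, derivative_mul,
    derivative_X, derivative_C, derivative_pow, map_mul, ← hf2, ← hf3, ← hf4,
    Polynomial.C_mul, Polynomial.C_1, Polynomial.C_0, map_ofNat, derivative_one,
    derivative_zero, Polynomial.derivative_ofNat, Polynomial.C_eq_natCast, Nat.cast_ofNat,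
    Nat.cast_one]
  ring
end

section
/- Suppose S_N and S_{N−1} are polynomials with only simple roots satisfying S_{N+1}S_{N−1} = −z(S_N·S_N'' − (S_N')²) − S_N·S_N' + (z+μ)S_N² with S_{N+1} a polynomial. If z₀ ≠ 0 is a common root of S_N and S_{N−1}, then z₀ is a root of S_N' , hence a multiple root of S_N, a contradiction; therefore S_N and S_{N−1} have no common nonzero root. -/
open Polynomial

theorem stmt6 (μ : ℂ) (SNm1 SN SNp1 : Polynomial ℂ)
    (hrec : SNp1 * SNm1 =
      -(X * (SN * derivative (derivative SN) - (derivative SN) ^ 2))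
        - SN * derivative SN + (X + Polynomial.C μ) * SN ^ 2)
    (hsimpleN : ∀ z : ℂ, SN.eval z = 0 → (derivative SN).eval z ≠ 0)
    (hsimpleNm1 : ∀ z : ℂ, SNm1.eval z = 0 → (derivative SNm1).eval z ≠ 0) :
    ∀ z₀ : ℂ, z₀ ≠ 0 → ¬(SN.eval z₀ = 0 ∧ SNm1.eval z₀ = 0) := by
  rintro z₀ hz ⟨h1, h2⟩
  have h := congrArg (eval z₀) hrec
  simp [h1, h2] at h
  rcases h with h | h
  · exact hz h
  · exact hsimpleN z₀ h1 h
end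

section
/- If a polynomial S satisfies the identity z²(S·S'''' − 4S'·S''' + 3(S'')²) + 2z(S·S''' − S'·S'') − 4z(z+μ)(S·S'' − (S')²) − 2S·S'' + 4μS·S' = 2n(n+1)S², and z₀ ≠ 0 is a root of S with S'(z₀) = 0, then also S''(z₀) = 0. -/
open Polynomial

theorem stmt7 (μ : ℂ) (n : ℕ) (S : Polynomial ℂ)
    (hident : X ^ 2 * (S * derivative (derivative (derivative (derivative S)))
        - 4 * derivative S * derivative (derivative (derivative S))
        + 3 * (derivative (derivative S)) ^ 2)
      + 2 * X * (S * derivative (derivative (derivative S))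
        - derivative S * derivative (derivative S))
      - 4 * X * (X + Polynomial.C μ) * (S * derivative (derivative S) - (derivative S) ^ 2)
      - 2 * S * derivative (derivative S) + 4 * Polynomial.C μ * S * derivative S
      = Polynomial.C (2 * (n : ℂ) * ((n : ℂ) + 1)) * S ^ 2)
    (z₀ : ℂ) (hz₀ : z₀ ≠ 0) (hroot : S.eval z₀ = 0)
    (hder : (derivative S).eval z₀ = 0) :
    (derivative (derivative S)).eval z₀ = 0 := by
  have h := congrArg (eval z₀) hident
  simp [hroot, hder] at h
  exact h.resolve_left hz₀
end

section
/- If a polynomial S satisfies z²(S·S'''' − 4S'·S''' + 3(S'')²) + 2z(S·S''' − S'·S'') − 4z(z+μ)(S·S'' − (S')²) − 2S·S'' + 4μS·S' = 2n(n+1)S², then every nonzero root of S is simple. -/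
open Polynomial

lemma prodlem8 (D Sa Sb Ua Ub : Polynomial ℂ) (a b k : ℕ)
    (ha : D ^ a * Sa = D ^ k * Ua) (hb : D ^ b * Sb = D ^ k * Ub) :
    D ^ (a + b) * (Sa * Sb) = D ^ (2 * k) * (Ua * Ub) := by
  linear_combination (D ^ b * Sb) * ha + (D ^ k * Ua) * hb

lemma step8 (z₀ : ℂ) (P U : Polynomial ℂ) (j k : ℕ) (hk : 1 ≤ k)
    (h : (X - C z₀) ^ j * P = (X - C z₀) ^ k * U) :
    (X - C z₀) ^ (j + 1) * derivative P
      = (X - C z₀) ^ k * (C ((k : ℂ) - (j : ℂ)) * U + (X - C z₀) * derivative U) := by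
  have hd := congrArg derivative h
  rw [derivative_mul, derivative_mul, derivative_pow, derivative_pow, derivative_X_sub_C] at hd
  have hj : (C (j : ℂ)) * ((X - C z₀) * (X - C z₀) ^ (j - 1)) = C (j : ℂ) * (X - C z₀) ^ j := by
    cases j with
    | zero => simp
    | succ m => rw [Nat.succ_sub_one]; ring
  have hkk : (C (k : ℂ)) * ((X - C z₀) * (X - C z₀) ^ (k - 1)) = C (k : ℂ) * (X - C z₀) ^ k := by
    cases k with
    | zero => omega
    | succ m => rw [Nat.succ_sub_one]; ring
  rw [map_sub]
  linear_combination (X - C z₀) * hd - P * hj + U * hkk - C (j : ℂ) * h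

theorem stmt8 (μ : ℂ) (n : ℕ) (S : Polynomial ℂ) (hS : S ≠ 0)
    (hident : X ^ 2 * (S * derivative (derivative (derivative (derivative S)))
        - 4 * derivative S * derivative (derivative (derivative S))
        + 3 * (derivative (derivative S)) ^ 2)
      + 2 * X * (S * derivative (derivative (derivative S))
        - derivative S * derivative (derivative S))
      - 4 * X * (X + Polynomial.C μ) * (S * derivative (derivative S) - (derivative S) ^ 2)
      - 2 * S * derivative (derivative S) + 4 * Polynomial.C μ * S * derivative S
      = Polynomial.C (2 * (n : ℂ) * ((n : ℂ) + 1)) * S ^ 2) :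
    ∀ z₀ : ℂ, z₀ ≠ 0 → S.eval z₀ = 0 → Polynomial.rootMultiplicity z₀ S = 1 := by
  intro z₀ hz₀ hroot
  by_contra hne
  set k := S.rootMultiplicity z₀ with hkdef
  have hk1 : 1 ≤ k := (S.rootMultiplicity_pos hS).mpr hroot
  have hk2 : 2 ≤ k := by omega
  set T : Polynomial ℂ := S /ₘ (X - C z₀) ^ k with hTdef
  have hT : S = (X - C z₀) ^ k * T := (S.pow_mul_divByMonic_rootMultiplicity_eq z₀).symm
  have ht : T.eval z₀ ≠ 0 := S.eval_divByMonic_pow_rootMultiplicity_ne_zero z₀ hS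
  set D : Polynomial ℂ := X - C z₀ with hDdef
  have h0 : D ^ 0 * S = D ^ k * T := by rw [pow_zero, one_mul, hT]
  have h1 := step8 z₀ S T 0 k hk1 h0
  set u1 : Polynomial ℂ := C ((k : ℂ) - ((0 : ℕ) : ℂ)) * T + D * derivative T with hu1
  have h2 := step8 z₀ (derivative S) u1 1 k hk1 h1
  set u2 : Polynomial ℂ := C ((k : ℂ) - ((1 : ℕ) : ℂ)) * u1 + D * derivative u1 with hu2
  have h3 := step8 z₀ (derivative (derivative S)) u2 2 k hk1 h2
  set u3 : Polynomial ℂ := C ((k : ℂ) - ((2 : ℕ) : ℂ)) * u2 + D * derivative u2 with hu3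
  have h4 := step8 z₀ (derivative (derivative (derivative S))) u3 3 k hk1 h3
  set u4 : Polynomial ℂ := C ((k : ℂ) - ((3 : ℕ) : ℂ)) * u3 + D * derivative u3 with hu4
  -- product identities
  have g00 := prodlem8 D S S T T 0 0 k h0 h0
  have g01 := prodlem8 D S (derivative S) T u1 0 1 k h0 h1
  have g02 := prodlem8 D S (derivative (derivative S)) T u2 0 2 k h0 h2
  have g03 := prodlem8 D S (derivative (derivative (derivative S))) T u3 0 3 k h0 h3
  have g04 := prodlem8 D S (derivative (derivative (derivative (derivative S)))) T u4 0 4 k h0 h4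
  have g11 := prodlem8 D (derivative S) (derivative S) u1 u1 1 1 k h1 h1
  have g12 := prodlem8 D (derivative S) (derivative (derivative S)) u1 u2 1 2 k h1 h2
  have g13 := prodlem8 D (derivative S) (derivative (derivative (derivative S))) u1 u3 1 3 k h1 h3
  have g22 := prodlem8 D (derivative (derivative S)) (derivative (derivative S)) u2 u2 2 2 k h2 h2
  have key : D ^ (2 * k) *
      (X ^ 2 * (T * u4 - 4 * (u1 * u3) + 3 * (u2 * u2))
        + 2 * X * D * (T * u3 - u1 * u2)
        - 4 * X * (X + C μ) * (D ^ 2 * (T * u2 - u1 * u1))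
        - 2 * (D ^ 2 * (T * u2)) + 4 * C μ * (D ^ 3 * (T * u1))
        - C (2 * (n : ℂ) * ((n : ℂ) + 1)) * (D ^ 4 * (T * T))) = 0 := by
    linear_combination (D : Polynomial ℂ) ^ 4 * hident
      - X ^ 2 * g04 + 4 * X ^ 2 * g13 - 3 * X ^ 2 * g22
      - 2 * X * D * g03 + 2 * X * D * g12
      + (4 * X * (X + C μ) + 2) * D ^ 2 * g02 - 4 * X * (X + C μ) * D ^ 2 * g11
      - 4 * C μ * D ^ 3 * g01
      + C (2 * (n : ℂ) * ((n : ℂ) + 1)) * D ^ 4 * g00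
  have hDne : D ≠ 0 := X_sub_C_ne_zero z₀
  have hQ : (X ^ 2 * (T * u4 - 4 * (u1 * u3) + 3 * (u2 * u2))
        + 2 * X * D * (T * u3 - u1 * u2)
        - 4 * X * (X + C μ) * (D ^ 2 * (T * u2 - u1 * u1))
        - 2 * (D ^ 2 * (T * u2)) + 4 * C μ * (D ^ 3 * (T * u1))
        - C (2 * (n : ℂ) * ((n : ℂ) + 1)) * (D ^ 4 * (T * T))) = 0 :=
    (mul_eq_zero.mp key).resolve_left (pow_ne_zero _ hDne)
  have hDe : D.eval z₀ = 0 := by simp [hDdef]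
  have e1 : u1.eval z₀ = (k : ℂ) * T.eval z₀ := by
    simp [hu1, hDe]
  have e2 : u2.eval z₀ = ((k : ℂ) - 1) * ((k : ℂ) * T.eval z₀) := by
    simp [hu2, hDe, e1]
  have e3 : u3.eval z₀ = ((k : ℂ) - 2) * (((k : ℂ) - 1) * ((k : ℂ) * T.eval z₀)) := by
    simp [hu3, hDe, e2]
  have e4 : u4.eval z₀ = ((k : ℂ) - 3) * (((k : ℂ) - 2) * (((k : ℂ) - 1) * ((k : ℂ) * T.eval z₀))) := by
    simp [hu4, hDe, e3]
  have heval := congrArg (eval z₀) hQ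
  simp only [eval_add, eval_sub, eval_mul, eval_pow, eval_X, eval_C, eval_ofNat, hDe,
    e1, e2, e3, e4, eval_zero] at heval
  have final : 6 * (k : ℂ) * ((k : ℂ) - 1) * (z₀ ^ 2 * (T.eval z₀) ^ 2) = 0 := by
    linear_combination heval
  have hκ0 : (k : ℂ) ≠ 0 := Nat.cast_ne_zero.mpr (by omega)
  have hκ1 : (k : ℂ) - 1 ≠ 0 := sub_ne_zero.mpr (by exact_mod_cast hne)
  have : (6 : ℂ) * (k : ℂ) * ((k : ℂ) - 1) * (z₀ ^ 2 * (T.eval z₀) ^ 2) ≠ 0 := by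
    apply mul_ne_zero
    · exact mul_ne_zero (mul_ne_zero (by norm_num) hκ0) hκ1
    · exact mul_ne_zero (pow_ne_zero _ hz₀) (pow_ne_zero _ ht)
  exact this final
end

section
/- Let φ_n(μ) = S_n(0;μ) for the Umemura polynomials of P_III. Then for n ≥ 3, assuming the relevant φ's are nonzero, φ_{n+1} = (φ_n φ_{n−1}/φ_{n−2})·(2μ² − 2n² + 2n − 1 − φ_n φ_{n−3}/(φ_{n−1}φ_{n−2})), where this follows from the recurrence S_{n+1}S_{n−1} = −z(S_nS_n''−(S_n')²) − S_nS_n' + (z+μ)S_n² together with the auxiliary identity 2μS_n'(0) − S_n''(0) = n(n+1)S_n(0). -/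
open Polynomial

/-- For the Umemura polynomials `S_n(z;μ)` with `φ_n = S_n(0;μ)`:
`φ_{n+1} = (φ_n φ_{n−1}/φ_{n−2})·(2μ² − 2n² + 2n − 1 − φ_n φ_{n−3}/(φ_{n−1}φ_{n−2}))` for `n ≥ 3`,
given the recurrence and the auxiliary identity `2μS_m'(0) − S_m''(0) = m(m+1)S_m(0)`. -/
theorem stmt11 (μ : ℂ) (S : ℤ → Polynomial ℂ)
    (hm1 : S (-1) = 1) (h0 : S 0 = 1)
    (hrec : ∀ m : ℤ, S (m + 1) * S (m - 1) =
      -(X * (S m * derivative (derivative (S m)) - (derivative (S m)) ^ 2))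
        - S m * derivative (S m) + (X + Polynomial.C μ) * (S m) ^ 2)
    (haux : ∀ m : ℤ, 0 ≤ m →
      2 * μ * (derivative (S m)).eval 0 - (derivative (derivative (S m))).eval 0
        = (m : ℂ) * ((m : ℂ) + 1) * (S m).eval 0)
    (n : ℤ) (hn : 3 ≤ n)
    (hnz : ∀ m : ℤ, n - 2 ≤ m → m ≤ n + 1 → (S m).eval 0 ≠ 0) :
    (S (n + 1)).eval 0 =
      ((S n).eval 0 * (S (n - 1)).eval 0 / (S (n - 2)).eval 0) *
        (2 * μ ^ 2 - 2 * (n : ℂ) ^ 2 + 2 * (n : ℂ) - 1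
          - (S n).eval 0 * (S (n - 3)).eval 0 / ((S (n - 1)).eval 0 * (S (n - 2)).eval 0)) := by
  -- evaluation of the recurrence at 0
  have key : ∀ m : ℤ, (S (m+1)).eval 0 * (S (m-1)).eval 0 =
      μ * ((S m).eval 0)^2 - (S m).eval 0 * (derivative (S m)).eval 0 := by
    intro m
    have h := congrArg (Polynomial.eval (0:ℂ)) (hrec m)
    simp at h
    linear_combination h
  -- evaluation of the derivative of the recurrence at 0
  have key' : ∀ m : ℤ, (derivative (S (m+1))).eval 0 * (S (m-1)).eval 0
      + (S (m+1)).eval 0 * (derivative (S (m-1))).eval 0 =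
      -2*(S m).eval 0 * (derivative (derivative (S m))).eval 0 + ((S m).eval 0)^2
        + 2*μ*(S m).eval 0 * (derivative (S m)).eval 0 := by
    intro m
    have h := congrArg (fun p : Polynomial ℂ => (derivative p).eval 0) (hrec m)
    simp [derivative_mul, derivative_pow] at h
    linear_combination h
  have h1 := key (n-2)
  rw [show n-2+1 = n-1 by ring, show n-2-1 = n-3 by ring] at h1
  have h2 := key (n-1)
  rw [show n-1+1 = n by ring, show n-1-1 = n-2 by ring] at h2
  have h3 := key n
  have h4 := key' (n-1)
  rw [show n-1+1 = n by ring, show n-1-1 = n-2 by ring] at h4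
  have h5 := haux (n-1) (by omega)
  push_cast at h5
  have e0 := hnz n (by omega) (by omega)
  have e1 := hnz (n-1) (by omega) (by omega)
  have e2 := hnz (n-2) (by omega) (by omega)
  field_simp
  apply mul_left_cancel₀ e1
  linear_combination ((S (n-2)).eval 0)^2 * h3
    - (S n).eval 0 * (S (n-2)).eval 0 *
        (h4 + 2*(S (n-1)).eval 0 * h5 - 2*μ*h2)
    + ((S n).eval 0)^2 * h1
end

section
/- Let μ ∈ ℤ∖{0} and suppose S_n(z) = z^σ·g(z) with g(z) = ∑_{j=0}^k a_j z^j, a_0 ≠ 0, satisfies the fourth-order identity z²(S_nS_n''''−4S_n'S_n'''+3(S_n'')²) + 2z(S_nS_n'''−S_n'S_n'') − 4z(z+μ)(S_nS_n''−(S_n')²) − 2S_nS_n'' + 4μS_nS_n' = 2n(n+1)S_n². Then a_1 = μa_0. -/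
open Polynomial Finset.Nat

lemma mycoeff1 (p q : Polynomial ℂ) :
    (p * q).coeff 1 = p.coeff 0 * q.coeff 1 + p.coeff 1 * q.coeff 0 := by
  rw [coeff_mul, show (Finset.HasAntidiagonal.antidiagonal 1 : Finset (ℕ × ℕ)) = {(0,1),(1,0)} from rfl]
  rw [Finset.sum_pair (by decide)]

lemma deriv_step (a b : ℕ) (ha : 1 ≤ a) (hb : 1 ≤ b) (p q q' : Polynomial ℂ)
    (h : X ^ a * p = X ^ b * q)
    (hq' : q' = C ((b : ℂ) - (a : ℂ)) * q + X * derivative q) :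
    X ^ (a + 1) * derivative p = X ^ b * q' := by
  obtain ⟨a', rfl⟩ : ∃ k, a = k + 1 := ⟨a - 1, by omega⟩
  obtain ⟨b', rfl⟩ : ∃ k, b = k + 1 := ⟨b - 1, by omega⟩
  have hd := congrArg derivative h
  rw [derivative_mul, derivative_mul, derivative_X_pow, derivative_X_pow] at hd
  simp only [Nat.add_sub_cancel, Nat.cast_add, Nat.cast_one, map_add, map_one, map_sub] at hd ⊢
  rw [hq']
  simp only [Nat.cast_add, Nat.cast_one, map_add, map_one, map_sub]
  linear_combination X * hd - (C (a' : ℂ) + 1) * h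

theorem stmt15 (μ : ℤ) (hμ : μ ≠ 0) (n : ℕ) (σ : ℕ) (hσ : 1 ≤ σ)
    (g : Polynomial ℂ) (hg0 : g.coeff 0 ≠ 0) (S : Polynomial ℂ)
    (hS : S = X ^ σ * g)
    (hident : X ^ 2 * (S * derivative (derivative (derivative (derivative S)))
        - 4 * derivative S * derivative (derivative (derivative S))
        + 3 * (derivative (derivative S)) ^ 2)
      + 2 * X * (S * derivative (derivative (derivative S))
        - derivative S * derivative (derivative S))
      - 4 * X * (X + Polynomial.C (μ : ℂ)) * (S * derivative (derivative S) - (derivative S) ^ 2)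
      - 2 * S * derivative (derivative S) + 4 * Polynomial.C (μ : ℂ) * S * derivative S
      = Polynomial.C (2 * (n : ℂ) * ((n : ℂ) + 1)) * S ^ 2) :
    g.coeff 1 = (μ : ℂ) * g.coeff 0 := by
  subst hS
  obtain ⟨σ', rfl⟩ : ∃ k, σ = k + 1 := ⟨σ - 1, by omega⟩
  set s : ℂ := ((σ' + 1 : ℕ) : ℂ) with hsdef
  obtain ⟨h1, hh1⟩ : ∃ h : Polynomial ℂ, h = C s * g + X * derivative g := ⟨_, rfl⟩
  have H1 : X ^ 1 * derivative (X ^ (σ' + 1) * g) = X ^ (σ' + 1) * h1 := by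
    rw [hh1, derivative_mul, derivative_X_pow]
    simp only [Nat.add_sub_cancel]
    ring
  obtain ⟨h2, hh2⟩ : ∃ h : Polynomial ℂ, h = C (s - ((1:ℕ):ℂ)) * h1 + X * derivative h1 := ⟨_, rfl⟩
  have H2 : X ^ 2 * derivative (derivative (X ^ (σ' + 1) * g)) = X ^ (σ' + 1) * h2 :=
    deriv_step 1 (σ' + 1) (by omega) (by omega) _ _ _ H1 (by rw [hh2])
  obtain ⟨h3, hh3⟩ : ∃ h : Polynomial ℂ, h = C (s - ((2:ℕ):ℂ)) * h2 + X * derivative h2 := ⟨_, rfl⟩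
  have H3 : X ^ 3 * derivative (derivative (derivative (X ^ (σ' + 1) * g))) = X ^ (σ' + 1) * h3 :=
    deriv_step 2 (σ' + 1) (by omega) (by omega) _ _ _ H2 (by rw [hh3])
  obtain ⟨h4, hh4⟩ : ∃ h : Polynomial ℂ, h = C (s - ((3:ℕ):ℂ)) * h3 + X * derivative h3 := ⟨_, rfl⟩
  have H4 : X ^ 4 * derivative (derivative (derivative (derivative (X ^ (σ' + 1) * g)))) = X ^ (σ' + 1) * h4 :=
    deriv_step 3 (σ' + 1) (by omega) (by omega) _ _ _ H3 (by rw [hh4])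
  obtain ⟨E, hE⟩ : ∃ E : Polynomial ℂ, E =
      g * h4 - 4 * (h1 * h3) + 3 * (h2 * h2) + 2 * (g * h3) - 2 * (h1 * h2)
      - 4 * ((X + C (μ : ℂ)) * (X * (g * h2 - h1 * h1))) - 2 * (g * h2)
      + 4 * (C (μ : ℂ) * (X * (g * h1)))
      - C (2 * (n : ℂ) * ((n : ℂ) + 1)) * (X ^ 2 * (g * g)) := ⟨_, rfl⟩
  have keyE : X ^ (σ' + 1) * (X ^ (σ' + 1) * E) = 0 := by
    rw [hE]
    linear_combination X ^ 2 * hident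
      - (X ^ (σ' + 1) * g) * H4
      + 4 * (X ^ (σ' + 1) * h1) * H3
      + 4 * (X ^ 3 * derivative (derivative (derivative (X ^ (σ' + 1) * g)))) * H1
      - 3 * (X ^ (σ' + 1) * h2 + X ^ 2 * derivative (derivative (X ^ (σ' + 1) * g))) * H2
      - 2 * (X ^ (σ' + 1) * g) * H3
      + 2 * (X ^ (σ' + 1) * h1) * H2
      + 2 * (X ^ 2 * derivative (derivative (X ^ (σ' + 1) * g))) * H1
      + 4 * ((X + C (μ : ℂ)) * X * (X ^ (σ' + 1) * g)) * H2
      - 4 * ((X + C (μ : ℂ)) * X * (X * derivative (X ^ (σ' + 1) * g) + X ^ (σ' + 1) * h1)) * H1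
      + 2 * (X ^ (σ' + 1) * g) * H2
      - 4 * (C (μ : ℂ) * X * (X ^ (σ' + 1) * g)) * H1
  have hc0 : E.coeff 1 = 0 := by
    have h := congrArg (fun p : Polynomial ℂ => p.coeff (1 + ((σ' + 1) + (σ' + 1)))) keyE
    simpa [← mul_assoc, ← pow_add, coeff_X_pow_mul] using h
  rw [hE, hh4, hh3, hh2, hh1] at hc0
  simp only [mycoeff1, mul_coeff_zero, coeff_derivative, coeff_add, coeff_sub, coeff_C,
    coeff_X_zero, coeff_X_one, coeff_X_pow, coeff_ofNat_zero, coeff_ofNat_succ,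
    coeff_natCast_ite, Nat.cast_ofNat, if_true, if_false, one_ne_zero, zero_ne_one,
    mul_zero, zero_mul, mul_one, one_mul, add_zero, zero_add, sub_zero, zero_sub] at hc0
  push_cast at hc0
  ring_nf at hc0
  have hsne : s ≠ 0 := by
    rw [hsdef]
    exact Nat.cast_ne_zero.mpr (Nat.succ_ne_zero σ')
  have h8 : (8 : ℂ) * s * g.coeff 0 ≠ 0 := by
    simp [hsne, hg0]
  apply mul_left_cancel₀ h8
  linear_combination -hc0
end

section
/- Under the hypotheses of the previous statement, if additionally σ = (1/2)m(m+1) with m = n − |μ| ≥ 0, then a_2 = (1/2)(μ² − |μ|/(2m+1))·a_0. -/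
open Polynomial

lemma auxD (k : ℕ) (p : ℂ[X]) :
    X * derivative (X ^ k * p) = C (k : ℂ) * (X ^ k * p) + X ^ (k + 1) * derivative p := by
  cases k with
  | zero => simp
  | succ k =>
    rw [derivative_mul, derivative_X_pow]
    push_cast
    ring

lemma stepD (t k : ℕ) (p A B : ℂ[X]) (h : X ^ k * p = X ^ t * A)
    (hB : B = (C (t : ℂ) - C (k : ℂ)) * A + X * derivative A) :
    X ^ (k + 1) * derivative p = X ^ t * B := by
  have e1 : X * derivative (X ^ k * p) = X * derivative (X ^ t * A) := by rw [h]
  rw [auxD, auxD, h] at e1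
  rw [hB]
  linear_combination e1

set_option maxHeartbeats 2000000 in
theorem stmt16 (μ : ℤ) (hμ : μ ≠ 0) (n : ℕ) (σ : ℕ) (hσ : 1 ≤ σ)
    (m : ℕ) (hm : (m : ℤ) = (n : ℤ) - |μ|) (hσm : σ = m * (m + 1) / 2)
    (g : Polynomial ℂ) (hg0 : g.coeff 0 ≠ 0) (S : Polynomial ℂ)
    (hS : S = X ^ σ * g)
    (hident : X ^ 2 * (S * derivative (derivative (derivative (derivative S)))
        - 4 * derivative S * derivative (derivative (derivative S))
        + 3 * (derivative (derivative S)) ^ 2)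
      + 2 * X * (S * derivative (derivative (derivative S))
        - derivative S * derivative (derivative S))
      - 4 * X * (X + Polynomial.C (μ : ℂ)) * (S * derivative (derivative S) - (derivative S) ^ 2)
      - 2 * S * derivative (derivative S) + 4 * Polynomial.C (μ : ℂ) * S * derivative S
      = Polynomial.C (2 * (n : ℂ) * ((n : ℂ) + 1)) * S ^ 2) :
    g.coeff 2 = (1 / 2) * ((μ : ℂ) ^ 2 - ((|μ| : ℤ) : ℂ) / (2 * (m : ℂ) + 1)) * g.coeff 0 := by
  have h0 : X ^ 0 * S = X ^ σ * g := by simpa using hS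
  have h1 : X ^ 1 * derivative S = X ^ σ * (C (σ:ℂ) * g + X * derivative g) :=
    stepD σ 0 S g _ h0 (by
      simp only [Nat.cast_zero, map_zero]
      ring)
  have h2 : X ^ 2 * derivative (derivative S)
      = X ^ σ * (C ((σ:ℂ)^2 - (σ:ℂ)) * g + C (2*(σ:ℂ)) * (X * derivative g)
          + X ^ 2 * derivative (derivative g)) :=
    stepD σ 1 _ _ _ h1 (by
      simp only [Nat.cast_one, map_one, map_sub, map_mul, map_pow, map_ofNat,
        derivative_add, derivative_mul, derivative_C, derivative_X]
      ring)
  have h3 : X ^ 3 * derivative (derivative (derivative S))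
      = X ^ σ * (C ((σ:ℂ)^3 - 3*(σ:ℂ)^2 + 2*(σ:ℂ)) * g
          + C (3*(σ:ℂ)^2 - 3*(σ:ℂ)) * (X * derivative g)
          + C (3*(σ:ℂ)) * (X ^ 2 * derivative (derivative g))
          + X ^ 3 * derivative (derivative (derivative g))) :=
    stepD σ 2 _ _ _ h2 (by
      simp only [Nat.cast_ofNat, map_sub, map_add, map_mul, map_pow, map_ofNat,
        derivative_add, derivative_mul, derivative_C, derivative_X, derivative_pow,
        derivative_ofNat]
      push_cast
      ring)
  have h4 : X ^ 4 * derivative (derivative (derivative (derivative S)))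
      = X ^ σ * (C ((σ:ℂ)^4 - 6*(σ:ℂ)^3 + 11*(σ:ℂ)^2 - 6*(σ:ℂ)) * g
          + C (4*(σ:ℂ)^3 - 12*(σ:ℂ)^2 + 8*(σ:ℂ)) * (X * derivative g)
          + C (6*(σ:ℂ)^2 - 6*(σ:ℂ)) * (X ^ 2 * derivative (derivative g))
          + C (4*(σ:ℂ)) * (X ^ 3 * derivative (derivative (derivative g)))
          + X ^ 4 * derivative (derivative (derivative (derivative g)))) :=
    stepD σ 3 _ _ _ h3 (by
      simp only [Nat.cast_ofNat, map_sub, map_add, map_mul, map_pow, map_ofNat,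
        derivative_add, derivative_mul, derivative_C, derivative_X, derivative_pow,
        derivative_ofNat]
      push_cast
      ring)
  set A1 : ℂ[X] := C (σ:ℂ) * g + X * derivative g with hA1
  set A2 : ℂ[X] := C ((σ:ℂ)^2 - (σ:ℂ)) * g + C (2*(σ:ℂ)) * (X * derivative g)
      + X ^ 2 * derivative (derivative g) with hA2
  set A3 : ℂ[X] := C ((σ:ℂ)^3 - 3*(σ:ℂ)^2 + 2*(σ:ℂ)) * g
      + C (3*(σ:ℂ)^2 - 3*(σ:ℂ)) * (X * derivative g)
      + C (3*(σ:ℂ)) * (X ^ 2 * derivative (derivative g))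
      + X ^ 3 * derivative (derivative (derivative g)) with hA3
  set A4 : ℂ[X] := C ((σ:ℂ)^4 - 6*(σ:ℂ)^3 + 11*(σ:ℂ)^2 - 6*(σ:ℂ)) * g
      + C (4*(σ:ℂ)^3 - 12*(σ:ℂ)^2 + 8*(σ:ℂ)) * (X * derivative g)
      + C (6*(σ:ℂ)^2 - 6*(σ:ℂ)) * (X ^ 2 * derivative (derivative g))
      + C (4*(σ:ℂ)) * (X ^ 3 * derivative (derivative (derivative g)))
      + X ^ 4 * derivative (derivative (derivative (derivative g))) with hA4
  have key : X ^ σ * X ^ σ * (g * A4 - 4 * A1 * A3 + 3 * A2 ^ 2 + 2 * (g * A3 - A1 * A2)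
        - 4 * X * (X + C (μ:ℂ)) * (g * A2 - A1 ^ 2) - 2 * g * A2 + 4 * C (μ:ℂ) * X * (g * A1))
      = X ^ σ * X ^ σ * (C (2 * (n : ℂ) * ((n : ℂ) + 1)) * (X ^ 2 * g ^ 2)) := by
    linear_combination (X:ℂ[X]) ^ 2 * hident
      - S * h4
      - (2 * S - 4 * (X * derivative S)) * h3
      - (3 * (X ^ 2 * derivative (derivative S) + X ^ σ * A2) - 2 * (X * derivative S)
          - 4 * X * (X + C (μ:ℂ)) * S - 2 * S) * h2
      - (-4 * (X ^ σ * A3) - 2 * (X ^ σ * A2)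
          + 4 * X * (X + C (μ:ℂ)) * (X * derivative S + X ^ σ * A1) + 4 * C (μ:ℂ) * X * S) * h1
      - (X ^ σ * A4 + 2 * (X ^ σ * A3) - 4 * X * (X + C (μ:ℂ)) * (X ^ σ * A2) - 2 * (X ^ σ * A2)
          + 4 * C (μ:ℂ) * X * (X ^ σ * A1)
          - C (2 * (n : ℂ) * ((n : ℂ) + 1)) * X ^ 2 * (S + X ^ σ * g)) * h0
  have Heq := mul_left_cancel₀
    (mul_ne_zero (pow_ne_zero σ (X_ne_zero (R := ℂ))) (pow_ne_zero σ (X_ne_zero (R := ℂ)))) key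
  -- coefficient lemmas for A's
  have cA1 : ∀ j : ℕ, j ≤ 2 → coeff A1 j = ((σ:ℂ) + j) * g.coeff j := by
    intro j hj
    rw [hA1]
    interval_cases j <;>
    · simp only [coeff_add, coeff_C_mul]
      simp only [coeff_mul, Finset.Nat.sum_antidiagonal_eq_sum_range_succ_mk,
        Finset.sum_range_succ, Finset.sum_range_zero, coeff_derivative, coeff_X_pow, coeff_X]
      norm_num [-mul_eq_mul_right_iff, -mul_eq_mul_left_iff]
      try ring
  have cA2 : ∀ j : ℕ, j ≤ 2 → coeff A2 j = ((σ:ℂ) + j) * ((σ:ℂ) + j - 1) * g.coeff j := by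
    intro j hj
    rw [hA2]
    interval_cases j <;>
    · simp only [coeff_add, coeff_C_mul]
      simp only [coeff_mul, Finset.Nat.sum_antidiagonal_eq_sum_range_succ_mk,
        Finset.sum_range_succ, Finset.sum_range_zero, coeff_derivative, coeff_X_pow, coeff_X]
      norm_num [-mul_eq_mul_right_iff, -mul_eq_mul_left_iff]
      try ring
  have cA3 : ∀ j : ℕ, j ≤ 2 → coeff A3 j = ((σ:ℂ) + j) * ((σ:ℂ) + j - 1) * ((σ:ℂ) + j - 2) * g.coeff j := by
    intro j hj
    rw [hA3]
    interval_cases j <;>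
    · simp only [coeff_add, coeff_C_mul]
      simp only [coeff_mul, Finset.Nat.sum_antidiagonal_eq_sum_range_succ_mk,
        Finset.sum_range_succ, Finset.sum_range_zero, coeff_derivative, coeff_X_pow, coeff_X]
      norm_num [-mul_eq_mul_right_iff, -mul_eq_mul_left_iff]
      try ring
  have cA4 : ∀ j : ℕ, j ≤ 2 → coeff A4 j = ((σ:ℂ) + j) * ((σ:ℂ) + j - 1) * ((σ:ℂ) + j - 2) * ((σ:ℂ) + j - 3) * g.coeff j := by
    intro j hj
    rw [hA4]
    interval_cases j <;>
    · simp only [coeff_add, coeff_C_mul]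
      simp only [coeff_mul, Finset.Nat.sum_antidiagonal_eq_sum_range_succ_mk,
        Finset.sum_range_succ, Finset.sum_range_zero, coeff_derivative, coeff_X_pow, coeff_X]
      norm_num [-mul_eq_mul_right_iff, -mul_eq_mul_left_iff]
      try ring
  have e1 := congrArg (fun p : ℂ[X] => p.coeff 1) Heq
  have e2 := congrArg (fun p : ℂ[X] => p.coeff 2) Heq
  simp only [pow_two] at e1 e2
  simp only [coeff_add, coeff_sub, coeff_mul, Finset.Nat.sum_antidiagonal_eq_sum_range_succ_mk,
    Finset.sum_range_succ, Finset.sum_range_zero, coeff_X, coeff_C, coeff_one,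
    coeff_ofNat_zero, coeff_ofNat_succ,
    cA1 0 (by norm_num), cA1 1 (by norm_num), cA1 2 (by norm_num),
    cA2 0 (by norm_num), cA2 1 (by norm_num), cA2 2 (by norm_num),
    cA3 0 (by norm_num), cA3 1 (by norm_num), cA3 2 (by norm_num),
    cA4 0 (by norm_num), cA4 1 (by norm_num), cA4 2 (by norm_num)] at e1
  simp only [coeff_add, coeff_sub, coeff_mul, Finset.Nat.sum_antidiagonal_eq_sum_range_succ_mk,
    Finset.sum_range_succ, Finset.sum_range_zero, coeff_X, coeff_C, coeff_one,
    coeff_ofNat_zero, coeff_ofNat_succ,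
    cA1 0 (by norm_num), cA1 1 (by norm_num), cA1 2 (by norm_num),
    cA2 0 (by norm_num), cA2 1 (by norm_num), cA2 2 (by norm_num),
    cA3 0 (by norm_num), cA3 1 (by norm_num), cA3 2 (by norm_num),
    cA4 0 (by norm_num), cA4 1 (by norm_num), cA4 2 (by norm_num)] at e2
  norm_num [-mul_eq_mul_right_iff, -mul_eq_mul_left_iff] at e1 e2
  -- clean scalar equations
  have hs0 : (σ:ℂ) ≠ 0 := Nat.cast_ne_zero.mpr (by omega)
  have E1c : (σ:ℂ) * g.coeff 0 * ((μ:ℂ) * g.coeff 0 - g.coeff 1) = 0 := by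
    linear_combination (1/8 : ℂ) * e1
  have hb1 : g.coeff 1 = (μ:ℂ) * g.coeff 0 := by
    rcases mul_eq_zero.mp E1c with h | h
    · rcases mul_eq_zero.mp h with h' | h'
      · exact absurd h' hs0
      · exact absurd h' hg0
    · exact (sub_eq_zero.mp h).symm
  have E2c : -4*(8*(σ:ℂ)+1) * g.coeff 0 * g.coeff 2 + 4*(4*(σ:ℂ)+1)*(μ:ℂ)*(g.coeff 0)*(g.coeff 1)
      + 4*(σ:ℂ)*(g.coeff 0)^2 = 2*(n:ℂ)*((n:ℂ)+1)*(g.coeff 0)^2 := by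
    linear_combination e2
  -- arithmetic facts
  have hnat : 2 * σ = m * (m + 1) := by
    have h2 : m * (m + 1) / 2 * 2 = m * (m + 1) :=
      Nat.div_mul_cancel (Nat.even_mul_succ_self m).two_dvd
    omega
  have hsval : (σ:ℂ) = ((m:ℂ)^2+(m:ℂ))/2 := by
    have := congrArg (Nat.cast (R := ℂ)) hnat
    push_cast at this
    field_simp
    linear_combination this
  have hnc : (n:ℂ) = (m:ℂ) + ((|μ| : ℤ) : ℂ) := by
    have hnint : (n:ℤ) = (m:ℤ) + |μ| := by omega
    have := congrArg (fun z : ℤ => (z:ℂ)) hnint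
    push_cast at this
    exact this
  have ha : ((|μ| : ℤ) : ℂ)^2 = ((μ:ℤ):ℂ)^2 := by
    have := congrArg (fun z : ℤ => (z:ℂ)) (sq_abs μ)
    push_cast at this
    exact this
  have hm1 : (2*(m:ℂ)+1) ≠ 0 := by
    have h := Nat.cast_ne_zero (R := ℂ) (n := 2*m+1) |>.mpr (by omega)
    push_cast at h
    exact h
  rw [hb1, hsval, hnc] at E2c
  have hc : (g.coeff 2 * (2*(2*(m:ℂ)+1))) * (2*(2*(m:ℂ)+1))
      = ((((μ:ℤ):ℂ)^2*(2*(m:ℂ)+1) - ((|μ| : ℤ) : ℂ)) * g.coeff 0) * (2*(2*(m:ℂ)+1)) := by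
    apply mul_left_cancel₀ hg0
    linear_combination (-1 : ℂ) * E2c - 2*(g.coeff 0)^2*ha
  have hd := mul_right_cancel₀ (mul_ne_zero two_ne_zero hm1) hc
  field_simp [hm1]
  linear_combination hd
end
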